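/- Let A be a commutative ring, M an A-module, and I, J finitely generated ideals of A such that M has no nonzero I-torsion. Then there is a natural isomorphism Hom_A(I, Hom_A(J, M)) ≅ Hom_A(IJ, M). -/

import Mathlib

open TensorProduct

/-- Let `A` be a commutative ring, `M` an `A`-module, and `I`, `J` finitely generated
ideals of `A` such that `M` has no nonzero `I`-torsion.  Then there is a natural
isomorphism `Hom_A(I, Hom_A(J, M)) ≅ Hom_A(IJ, M)`, induced by the multiplication map
(`e ψ (x * y) = ψ x y` for `x ∈ I`, `y ∈ J`). -/
theorem hom_hom_equiv_hom_mul
    (A : Type*) [CommRing A] (M : Type*) [AddCommGroup M] [Module A M]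
    (I J : Ideal A) (hI : I.FG) (hJ : J.FG)
    (hM : ∀ m : M, (∃ n : ℕ, ∀ x ∈ I ^ n, x • m = 0) → m = 0) :
    ∃ e : (↥I →ₗ[A] (↥J →ₗ[A] M)) ≃ₗ[A] (↥(I * J) →ₗ[A] M),
      ∀ (ψ : ↥I →ₗ[A] (↥J →ₗ[A] M)) (x : A) (hx : x ∈ I) (y : A) (hy : y ∈ J),
        e ψ ⟨x * y, Ideal.mul_mem_mul hx hy⟩ = ψ ⟨x, hx⟩ ⟨y, hy⟩ := by
  classical
  -- the multiplication map `I ⊗ J → IJ`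
  let m : (↥I ⊗[A] ↥J) →ₗ[A] ↥(I * J) :=
    TensorProduct.lift (LinearMap.mk₂ A
      (fun x y => (⟨x.1 * y.1, Ideal.mul_mem_mul x.2 y.2⟩ : ↥(I * J)))
      (fun x x' y => by ext; simp [add_mul])
      (fun a x y => by ext; simp [mul_assoc])
      (fun x y y' => by ext; simp [mul_add])
      (fun a x y => by ext; simp; ring))
  have m_tmul : ∀ (x : ↥I) (y : ↥J),
      m (x ⊗ₜ y) = (⟨x.1 * y.1, Ideal.mul_mem_mul x.2 y.2⟩ : ↥(I * J)) := fun x y => rfl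
  -- the multiplication map `I ⊗ J → J`
  let m' : (↥I ⊗[A] ↥J) →ₗ[A] ↥J :=
    TensorProduct.lift (LinearMap.mk₂ A
      (fun x y => x.1 • y)
      (fun x x' y => by simp [add_smul])
      (fun a x y => by simp [smul_smul])
      (fun x y y' => by simp)
      (fun a x y => by simp [smul_smul, mul_comm]))
  have hmm' : (I * J).subtype ∘ₗ m = J.subtype ∘ₗ m' := by
    apply TensorProduct.ext'
    intro x y
    simp [m, m', Submodule.coe_smul]
  -- the kernel of `m` is annihilated by `I`
  have hker : ∀ t ∈ LinearMap.ker m, ∀ x ∈ I, x • t = 0 := by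
    intro t ht x hx
    have h1 : m' t = 0 := by
      have : ((m' t : ↥J) : A) = ((m t : ↥(I * J)) : A) := by
        have := congrArg (fun f => f t) hmm'.symm
        simpa using this
      rw [LinearMap.mem_ker.mp ht] at this
      exact Subtype.ext (by simpa using this)
    have key : x • t = TensorProduct.mk A ↥I ↥J ⟨x, hx⟩ (m' t) := by
      have : (x • LinearMap.id : (↥I ⊗[A] ↥J) →ₗ[A] (↥I ⊗[A] ↥J))
          = (TensorProduct.mk A ↥I ↥J ⟨x, hx⟩) ∘ₗ m' := by
        apply TensorProduct.ext'
        intro a b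
        simp only [LinearMap.smul_apply, LinearMap.id_apply, LinearMap.comp_apply]
        have h2 : m' (a ⊗ₜ b) = a.1 • b := rfl
        rw [h2, TensorProduct.mk_apply, TensorProduct.tmul_smul,
          TensorProduct.smul_tmul', TensorProduct.smul_tmul']
        congr 1
        exact Subtype.ext (mul_comm x a.1)
      have := congrArg (fun f => f t) this
      simpa using this
    rw [key, h1, map_zero]
  -- m is surjective
  have hm : Function.Surjective m := by
    intro z
    obtain ⟨z, hz⟩ := z
    have : ∃ t, ((m t : ↥(I * J)) : A) = z := by
      refine Submodule.mul_induction_on hz ?_ ?_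
      · intro x hx y hy
        exact ⟨(⟨x, hx⟩ : ↥I) ⊗ₜ (⟨y, hy⟩ : ↥J), rfl⟩
      · rintro a b ⟨t₁, ht₁⟩ ⟨t₂, ht₂⟩
        exact ⟨t₁ + t₂, by simp [ht₁, ht₂]⟩
    obtain ⟨t, ht⟩ := this
    exact ⟨t, Subtype.ext ht⟩
  -- the easy direction as a linear map
  let G : (↥(I * J) →ₗ[A] M) →ₗ[A] (↥I →ₗ[A] (↥J →ₗ[A] M)) :=
    (TensorProduct.lift.equiv (RingHom.id A) ↥I ↥J M).symm.toLinearMap ∘ₗ LinearMap.lcomp A M m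
  have hG : ∀ (φ : ↥(I * J) →ₗ[A] M) (x : ↥I) (y : ↥J),
      G φ x y = φ ⟨x.1 * y.1, Ideal.mul_mem_mul x.2 y.2⟩ := by
    intro φ x y
    simp only [G, LinearMap.comp_apply, LinearEquiv.coe_coe, LinearMap.lcomp_apply,
      TensorProduct.lift.equiv_symm_apply, LinearMap.comp_apply]
    rw [m_tmul]
  -- G is injective
  have hGinj : Function.Injective G := by
    intro φ₁ φ₂ h
    ext z
    obtain ⟨t, rfl⟩ := hm z
    induction t with
    | zero => simp
    | tmul x y =>
      rw [m_tmul]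
      rw [← hG φ₁ x y, ← hG φ₂ x y, h]
    | add t₁ t₂ h₁ h₂ => simp [map_add, h₁, h₂]
  -- G is surjective
  have hGsurj : Function.Surjective G := by
    intro ψ
    set Φ : (↥I ⊗[A] ↥J) →ₗ[A] M := TensorProduct.lift ψ with hΦ
    have hkill : LinearMap.ker m ≤ LinearMap.ker Φ := by
      intro t ht
      rw [LinearMap.mem_ker]
      refine hM _ ⟨1, ?_⟩
      intro x hx
      rw [pow_one] at hx
      rw [← map_smul, hker t ht x hx, map_zero]
    set e₀ := m.quotKerEquivOfSurjective hm with he₀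
    refine ⟨(Submodule.liftQ (LinearMap.ker m) Φ hkill) ∘ₗ e₀.symm.toLinearMap, ?_⟩
    have hfact : ∀ t : ↥I ⊗[A] ↥J,
        ((Submodule.liftQ (LinearMap.ker m) Φ hkill) ∘ₗ e₀.symm.toLinearMap) (m t) = Φ t := by
      intro t
      have h1 : e₀ (Submodule.Quotient.mk t) = m t := rfl
      have h2 : e₀.symm (m t) = Submodule.Quotient.mk t := by
        rw [← h1, LinearEquiv.symm_apply_apply]
      simp [h2]
    ext x y
    rw [hG]
    rw [← m_tmul x y, hfact, hΦ, TensorProduct.lift.tmul]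
  exact ⟨(LinearEquiv.ofBijective G ⟨hGinj, hGsurj⟩).symm, by
    intro ψ x hx y hy
    have h := (LinearEquiv.ofBijective G ⟨hGinj, hGsurj⟩).apply_symm_apply ψ
    have h2 := congrArg (fun f => f (⟨x, hx⟩ : ↥I) (⟨y, hy⟩ : ↥J)) h
    change G ((LinearEquiv.ofBijective G ⟨hGinj, hGsurj⟩).symm ψ) _ _ = _ at h2
    rw [← h2, hG]⟩
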